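/- Let U(t) = Σ_{n≥0} (∫_0^1 (y)_{n,λ} dy) t^n/n! be the degenerate moment series of a uniform random variable on [0,1], and for an integer m ≥ 0 let S^{(m)}_{n,λ}(x) be defined by the formal power series identity (Σ_{n≥0} S^{(m)}_{n,λ}(x) t^n/n!)·U(t)^m = e_λ^x(t) (these are the degenerate Sheffer polynomials associated with the sum of m independent uniform [0,1] random variables). Then for every integer n ≥ 0 and every real x: S^{(m)}_{n,λ}(x) = Σ_{k=0}^{n} (C(n,k)/C(n−k+m,m))·λ^{n−k}·S₁(n−k+m,m)·β^{(m)}_{k,λ}(x). -/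

import Mathlib

open Finset PowerSeries

noncomputable def dff (lam x : ℝ) (n : ℕ) : ℝ := ∏ i ∈ Finset.range n, (x - i * lam)

noncomputable def degExp (lam x : ℝ) : PowerSeries ℝ :=
  PowerSeries.mk fun k => dff lam x k / k.factorial

noncomputable def S1 : ℕ → ℕ → ℝ
  | 0, 0 => 1
  | 0, _ + 1 => 0
  | n + 1, 0 => -(n : ℝ) * S1 n 0
  | n + 1, k + 1 => S1 n k - (n : ℝ) * S1 n (k + 1)

lemma S1_zero_right : ∀ n, S1 n 0 = if n = 0 then 1 else 0 := by
  intro n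
  induction n with
  | zero => simp [S1]
  | succ k ih => simp [S1, ih]

lemma S1_eq_zero : ∀ n m, n < m → S1 n m = 0 := by
  intro n
  induction n with
  | zero => intro m hm; match m, hm with | m+1, _ => simp [S1]
  | succ k ih =>
    intro m hm
    match m, hm with
    | m+1, hm =>
      have h1 : k < m := by omega
      have h2 : k < m+1 := by omega
      simp [S1, ih m h1, ih (m+1) h2]

lemma dff_zero (lam x : ℝ) : dff lam x 0 = 1 := by simp [dff]

lemma dff_succ (lam x : ℝ) (n : ℕ) : dff lam x (n+1) = dff lam x n * (x - n * lam) := by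
  simp [dff, Finset.prod_range_succ]

lemma dff_at_zero (lam : ℝ) (n : ℕ) : dff lam 0 n = if n = 0 then 1 else 0 := by
  cases n with
  | zero => simp [dff]
  | succ k =>
    simp only [dff, Nat.succ_ne_zero, if_false]
    apply Finset.prod_eq_zero (Finset.mem_range.2 (Nat.succ_pos k))
    simp

lemma dff_continuous (lam : ℝ) (n : ℕ) : Continuous fun y => dff lam y n := by
  unfold dff
  exact continuous_finset_prod _ fun i _ => (continuous_id.sub continuous_const)

noncomputable def ddff (lam : ℝ) (y : ℝ) : ℕ → ℝ
  | 0 => 0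
  | n + 1 => ddff lam y n * (y - n * lam) + dff lam y n

lemma hasDerivAt_dff (lam y : ℝ) (n : ℕ) :
    HasDerivAt (fun z => dff lam z n) (ddff lam y n) y := by
  induction n with
  | zero => simpa [dff, ddff] using (hasDerivAt_const y (1:ℝ))
  | succ k ih =>
    have h2 : HasDerivAt (fun z : ℝ => z - k * lam) 1 y := by
      simpa using (hasDerivAt_id y).sub_const (k * lam)
    have := ih.mul h2
    simp only [mul_one] at this
    have h3 : (fun z => dff lam z (k+1)) = (fun z => dff lam z k) * fun z : ℝ => z - k * lam := by
      funext z; simp [dff_succ]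
    rw [h3]; exact this

lemma ddff_continuous (lam : ℝ) (n : ℕ) : Continuous fun y => ddff lam y n := by
  induction n with
  | zero => simpa [ddff] using continuous_const
  | succ k ih =>
    show Continuous fun y => ddff lam y k * (y - k * lam) + dff lam y k
    exact (ih.mul (continuous_id.sub continuous_const)).add (dff_continuous lam k)

lemma integral_ddff (lam : ℝ) (n : ℕ) :
    (∫ y in (0:ℝ)..1, ddff lam y n) = dff lam 1 n - dff lam 0 n := by
  apply intervalIntegral.integral_eq_sub_of_hasDerivAt (f := fun y => dff lam y n)
  · intro y _
    exact hasDerivAt_dff lam y n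
  · exact (ddff_continuous lam n).intervalIntegrable 0 1

-- helper: coefficient of (1 + C lam * X) * d F
lemma coeff_aux (lam : ℝ) (F : PowerSeries ℝ) (n : ℕ) :
    coeff n ((1 + PowerSeries.C lam * X) * d⁄dX ℝ F)
      = (n+1 : ℝ) * coeff (n+1) F + lam * (n * coeff n F) := by
  rw [add_mul, one_mul, mul_assoc, map_add, coeff_derivative, PowerSeries.coeff_C_mul]
  cases n with
  | zero => simp [coeff_zero_X_mul]
  | succ k =>
    rw [coeff_succ_X_mul, coeff_derivative]
    push_cast
    ring

lemma ode_unique (lam : ℝ) (a c F G : PowerSeries ℝ)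
    (hF : (1 + PowerSeries.C lam * X) * d⁄dX ℝ F = a * F + c)
    (hG : (1 + PowerSeries.C lam * X) * d⁄dX ℝ G = a * G + c)
    (h0 : coeff 0 F = coeff 0 G) : F = G := by
  ext n
  induction n using Nat.strong_induction_on with
  | _ n ih =>
    match n with
    | 0 => exact h0
    | Nat.succ n =>
      have hFn := congrArg (coeff n) hF
      have hGn := congrArg (coeff n) hG
      rw [coeff_aux, map_add] at hFn hGn
      have hc : coeff n (a * F) = coeff n (a * G) := by
        rw [coeff_mul, coeff_mul]
        refine Finset.sum_congr rfl fun p hp => ?_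
        have : p.2 ≤ n := by
          have := Finset.HasAntidiagonal.mem_antidiagonal.1 hp; omega
        rw [ih p.2 (by omega)]
      have hn : coeff n F = coeff n G := ih n (by omega)
      rw [hn, hc] at hFn
      have key : ((n+1 : ℕ) : ℝ) * coeff (n+1) F = ((n+1 : ℕ) : ℝ) * coeff (n+1) G := by
        push_cast
        linarith [hFn, hGn]
      have h1 : ((n+1 : ℕ) : ℝ) ≠ 0 := by positivity
      exact mul_left_cancel₀ h1 key

noncomputable def Pser (lam : ℝ) (m : ℕ) : PowerSeries ℝ :=
  PowerSeries.mk fun n => S1 n m * lam ^ n / n.factorial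

lemma Pser_zero (lam : ℝ) : Pser lam 0 = 1 := by
  ext n
  rw [Pser, coeff_mk, S1_zero_right, PowerSeries.coeff_one]
  split <;> simp_all

lemma ode_P (lam : ℝ) (m : ℕ) :
    (1 + PowerSeries.C lam * X) * d⁄dX ℝ (Pser lam (m+1))
      = PowerSeries.C lam * Pser lam m := by
  ext n
  rw [coeff_aux, PowerSeries.coeff_C_mul]
  simp only [Pser, coeff_mk]
  have h : S1 (n+1) (m+1) = S1 n m - (n : ℝ) * S1 n (m+1) := rfl
  rw [h, Nat.factorial_succ]
  have h2 : (n.factorial : ℝ) ≠ 0 := by positivity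
  push_cast
  field_simp
  ring

lemma ode_E (lam y : ℝ) :
    (1 + PowerSeries.C lam * X) * d⁄dX ℝ (degExp lam y)
      = PowerSeries.C y * degExp lam y := by
  ext n
  rw [coeff_aux, PowerSeries.coeff_C_mul]
  simp only [degExp, coeff_mk]
  rw [dff_succ, Nat.factorial_succ]
  have h2 : (n.factorial : ℝ) ≠ 0 := by positivity
  push_cast
  field_simp
  ring

noncomputable def Dser (lam y : ℝ) : PowerSeries ℝ :=
  PowerSeries.mk fun n => ddff lam y n / n.factorial

lemma ode_D (lam y : ℝ) :
    (1 + PowerSeries.C lam * X) * d⁄dX ℝ (Dser lam y)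
      = PowerSeries.C y * Dser lam y + degExp lam y := by
  ext n
  rw [coeff_aux, map_add, PowerSeries.coeff_C_mul]
  simp only [Dser, degExp, coeff_mk]
  have h : ddff lam y (n+1) = ddff lam y n * (y - n * lam) + dff lam y n := rfl
  rw [h, Nat.factorial_succ]
  have h2 : (n.factorial : ℝ) ≠ 0 := by positivity
  push_cast
  field_simp
  ring

lemma P1_mul_E (lam y : ℝ) :
    Pser lam 1 * degExp lam y
      = PowerSeries.C lam * Dser lam y := by
  have hP1 : (1 + PowerSeries.C lam * X) * d⁄dX ℝ (Pser lam 1) = PowerSeries.C lam := by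
    have := ode_P lam 0
    rwa [Pser_zero, mul_one] at this
  apply ode_unique lam (PowerSeries.C y) (PowerSeries.C lam * degExp lam y)
  · rw [Derivation.leibniz]
    simp only [smul_eq_mul]
    rw [mul_add]
    calc (1 + PowerSeries.C lam * X) * (Pser lam 1 * d⁄dX ℝ (degExp lam y))
          + (1 + PowerSeries.C lam * X) * (degExp lam y * d⁄dX ℝ (Pser lam 1))
        = Pser lam 1 * ((1 + PowerSeries.C lam * X) * d⁄dX ℝ (degExp lam y))
          + degExp lam y * ((1 + PowerSeries.C lam * X) * d⁄dX ℝ (Pser lam 1)) := by ring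
      _ = PowerSeries.C y * (Pser lam 1 * degExp lam y)
          + PowerSeries.C lam * degExp lam y := by rw [ode_E, hP1]; ring
  · calc (1 + PowerSeries.C lam * X) * d⁄dX ℝ (PowerSeries.C lam * Dser lam y)
        = PowerSeries.C lam * ((1 + PowerSeries.C lam * X) * d⁄dX ℝ (Dser lam y)) := by
          rw [show (PowerSeries.C lam * Dser lam y) = lam • Dser lam y by
              rw [PowerSeries.smul_eq_C_mul],
            Derivation.map_smul, PowerSeries.smul_eq_C_mul]
          ring
      _ = _ := by rw [ode_D]; ring
  · simp [PowerSeries.coeff_mul, Pser, Dser, coeff_mk, show S1 0 1 = (0:ℝ) from rfl, ddff]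

lemma P1_mul_P (lam : ℝ) : ∀ m : ℕ, Pser lam 1 * Pser lam m
    = PowerSeries.C ((m+1 : ℕ) : ℝ) * Pser lam (m+1) := by
  intro m
  induction m with
  | zero => rw [Pser_zero]; norm_num
  | succ m ih =>
    apply ode_unique lam 0
      (PowerSeries.C lam * (PowerSeries.C ((m+2 : ℕ) : ℝ) * Pser lam (m+1)))
    · rw [Derivation.leibniz]
      simp only [smul_eq_mul]
      rw [mul_add, zero_mul, zero_add]
      calc (1 + PowerSeries.C lam * X) * (Pser lam 1 * d⁄dX ℝ (Pser lam (m+1)))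
            + (1 + PowerSeries.C lam * X) * (Pser lam (m+1) * d⁄dX ℝ (Pser lam 1))
          = Pser lam 1 * ((1 + PowerSeries.C lam * X) * d⁄dX ℝ (Pser lam (m+1)))
            + Pser lam (m+1) * ((1 + PowerSeries.C lam * X) * d⁄dX ℝ (Pser lam 1)) := by
            ring
        _ = Pser lam 1 * (PowerSeries.C lam * Pser lam m)
            + Pser lam (m+1) * PowerSeries.C lam := by
            have := ode_P lam 0
            rw [Pser_zero, mul_one] at this
            rw [ode_P, this]
        _ = PowerSeries.C lam * (Pser lam 1 * Pser lam m)
            + PowerSeries.C lam * Pser lam (m+1) := by ring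
        _ = _ := by
            rw [ih]
            have hcast : ((m+1+1:ℕ):ℝ) = ((m+1:ℕ):ℝ) + 1 := by push_cast; ring
            rw [hcast, map_add, map_one]
            ring
    · rw [zero_mul, zero_add]
      rw [show (PowerSeries.C ((m+2 : ℕ) : ℝ) * Pser lam (m+2))
          = ((m+2 : ℕ) : ℝ) • Pser lam (m+2) by rw [PowerSeries.smul_eq_C_mul],
        Derivation.map_smul, PowerSeries.smul_eq_C_mul]
      calc (1 + PowerSeries.C lam * X)
            * (PowerSeries.C ((m+2 : ℕ) : ℝ) * d⁄dX ℝ (Pser lam (m+2)))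
          = PowerSeries.C ((m+2 : ℕ) : ℝ)
            * ((1 + PowerSeries.C lam * X) * d⁄dX ℝ (Pser lam (m+2))) := by ring
        _ = _ := by rw [ode_P]; ring
    · simp [PowerSeries.coeff_mul, Pser, coeff_mk, show S1 0 1 = (0:ℝ) from rfl,
        show S1 0 (m+2) = (0:ℝ) from rfl]

lemma P1_pow (lam : ℝ) : ∀ m : ℕ, Pser lam 1 ^ m
    = PowerSeries.C (m.factorial : ℝ) * Pser lam m := by
  intro m
  induction m with
  | zero => rw [Pser_zero]; norm_num
  | succ m ih =>
    rw [pow_succ, ih, mul_assoc, mul_comm (Pser lam m), P1_mul_P, Nat.factorial_succ]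
    rw [← mul_assoc, ← map_mul]
    push_cast
    ring_nf

noncomputable def User (lam : ℝ) : PowerSeries ℝ :=
  PowerSeries.mk fun n => (∫ y in (0:ℝ)..1, dff lam y n) / n.factorial

lemma P1_mul_U (lam : ℝ) :
    Pser lam 1 * User lam = PowerSeries.C lam * (degExp lam 1 - 1) := by
  ext n
  rw [PowerSeries.coeff_mul]
  have key : ∀ y : ℝ, (∑ p ∈ Finset.HasAntidiagonal.antidiagonal n,
      coeff p.1 (Pser lam 1) * (dff lam y p.2 / p.2.factorial))
        = lam * (ddff lam y n / n.factorial) := by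
    intro y
    have h := congrArg (coeff n) (P1_mul_E lam y)
    rw [PowerSeries.coeff_mul, PowerSeries.coeff_C_mul] at h
    simpa [degExp, Dser, coeff_mk] using h
  calc ∑ p ∈ Finset.HasAntidiagonal.antidiagonal n, coeff p.1 (Pser lam 1) * coeff p.2 (User lam)
      = ∑ p ∈ Finset.HasAntidiagonal.antidiagonal n, ∫ y in (0:ℝ)..1,
          coeff p.1 (Pser lam 1) * (dff lam y p.2 / p.2.factorial) := by
        refine Finset.sum_congr rfl fun p _ => ?_
        rw [intervalIntegral.integral_const_mul, intervalIntegral.integral_div]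
        simp [User, coeff_mk]
    _ = ∫ y in (0:ℝ)..1, ∑ p ∈ Finset.HasAntidiagonal.antidiagonal n,
          coeff p.1 (Pser lam 1) * (dff lam y p.2 / p.2.factorial) := by
        rw [intervalIntegral.integral_finset_sum]
        intro p _
        exact (continuous_const.mul ((dff_continuous lam p.2).div_const _)).intervalIntegrable 0 1
    _ = ∫ y in (0:ℝ)..1, lam * (ddff lam y n / n.factorial) := by simp_rw [key]
    _ = lam * ((dff lam 1 n - dff lam 0 n) / n.factorial) := by
        rw [intervalIntegral.integral_const_mul, intervalIntegral.integral_div, integral_ddff]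
    _ = coeff n (PowerSeries.C lam * (degExp lam 1 - 1)) := by
        rw [PowerSeries.coeff_C_mul, map_sub, PowerSeries.coeff_one]
        simp only [degExp, coeff_mk, dff_at_zero]
        by_cases h : n = 0
        · subst h; norm_num
        · simp only [h, if_false, sub_zero]

noncomputable def Lser (lam : ℝ) (m : ℕ) : PowerSeries ℝ :=
  PowerSeries.mk fun j => lam ^ j * S1 (j+m) m / (((j+m).choose m : ℝ) * j.factorial)

lemma key1 (lam : ℝ) (m : ℕ) :
    (PowerSeries.C lam) ^ m * (X ^ m * Lser lam m)
      = PowerSeries.C (m.factorial : ℝ) * Pser lam m := by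
  ext n
  rw [← map_pow, PowerSeries.coeff_C_mul, PowerSeries.coeff_C_mul, coeff_X_pow_mul']
  simp only [Lser, Pser, coeff_mk]
  split
  · next hmn =>
    have h : n - m + m = n := by omega
    rw [h]
    have hch : (n.choose m : ℝ) = n.factorial / (m.factorial * (n-m).factorial) :=
      Nat.cast_choose ℝ hmn
    have hlam : lam ^ m * lam ^ (n - m) = lam ^ n := by
      rw [← pow_add]; congr 1; omega
    rw [hch, ← hlam]
    have h1 : (n.factorial : ℝ) ≠ 0 := by positivity
    have h2 : (m.factorial : ℝ) ≠ 0 := by positivity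
    have h3 : ((n-m).factorial : ℝ) ≠ 0 := by positivity
    field_simp
  · next hmn =>
    rw [S1_eq_zero n m (by omega)]
    simp

lemma key2 (lam : ℝ) (hlam : lam ≠ 0) (m : ℕ) :
    X ^ m * Lser lam m * User lam ^ m = (degExp lam 1 - 1) ^ m := by
  have hC : (PowerSeries.C lam) ^ m ≠ 0 := by
    apply pow_ne_zero
    intro h
    have := congrArg (PowerSeries.constantCoeff) h
    simp at this
    exact hlam this
  apply mul_left_cancel₀ hC
  calc (PowerSeries.C lam) ^ m * (X ^ m * Lser lam m * User lam ^ m)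
      = ((PowerSeries.C lam) ^ m * (X ^ m * Lser lam m)) * User lam ^ m := by ring
    _ = (PowerSeries.C (m.factorial : ℝ) * Pser lam m) * User lam ^ m := by rw [key1]
    _ = (Pser lam 1) ^ m * User lam ^ m := by rw [P1_pow]
    _ = (Pser lam 1 * User lam) ^ m := by rw [mul_pow]
    _ = (PowerSeries.C lam * (degExp lam 1 - 1)) ^ m := by rw [P1_mul_U]
    _ = (PowerSeries.C lam) ^ m * (degExp lam 1 - 1) ^ m := by rw [mul_pow]

theorem stmt13 (lam : ℝ) (hlam : lam ≠ 0)
    (B : ℕ → ℝ → ℕ → ℝ)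
    (hB : ∀ m x, (PowerSeries.mk fun n => B m x n / n.factorial) * (degExp lam 1 - 1) ^ m
        = (PowerSeries.X : PowerSeries ℝ) ^ m * degExp lam x)
    (S : ℕ → ℝ → ℕ → ℝ)
    (hS : ∀ m x, (PowerSeries.mk fun n => S m x n / n.factorial) *
        (PowerSeries.mk fun n => (∫ y in (0:ℝ)..1, dff lam y n) / n.factorial) ^ m
          = degExp lam x)
    (m n : ℕ) (x : ℝ) :
    S m x n = ∑ k ∈ Finset.range (n + 1),
      ((n.choose k : ℝ) / ((n - k + m).choose m : ℝ)) * lam ^ (n - k)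
        * S1 (n - k + m) m * B m x k := by
  have hUser : (PowerSeries.mk fun n => (∫ y in (0:ℝ)..1, dff lam y n) / n.factorial)
      = User lam := rfl
  set D : PowerSeries ℝ := degExp lam 1 - 1 with hDdef
  have hUne : User lam ≠ 0 := by
    intro h
    have := congrArg (coeff 0) h
    simp [User, coeff_mk, dff_zero] at this
  have hDne : D ≠ 0 := by
    intro h
    have := congrArg (coeff 1) h
    simp [hDdef, degExp, coeff_mk, dff, PowerSeries.coeff_one] at this
  have hXne : (X : PowerSeries ℝ) ≠ 0 := PowerSeries.X_ne_zero
  have hmain : (PowerSeries.mk fun n => S m x n / n.factorial)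
      = (PowerSeries.mk fun n => B m x n / n.factorial) * Lser lam m := by
    apply mul_right_cancel₀
      (b := User lam ^ m * (X ^ m * D ^ m))
      (mul_ne_zero (pow_ne_zero _ hUne) (mul_ne_zero (pow_ne_zero _ hXne) (pow_ne_zero _ hDne)))
    calc (PowerSeries.mk fun n => S m x n / n.factorial) * (User lam ^ m * (X ^ m * D ^ m))
        = ((PowerSeries.mk fun n => S m x n / n.factorial) * User lam ^ m) * (X ^ m * D ^ m) := by
          ring
      _ = degExp lam x * (X ^ m * D ^ m) := by rw [← hUser, hS m x]
      _ = (X ^ m * degExp lam x) * D ^ m := by ring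
      _ = ((PowerSeries.mk fun n => B m x n / n.factorial) * D ^ m) * D ^ m := by
          rw [hB m x]
      _ = (PowerSeries.mk fun n => B m x n / n.factorial)
            * (X ^ m * Lser lam m * User lam ^ m) * D ^ m := by
          rw [key2 lam hlam m]
      _ = _ := by ring
  have hco := congrArg (coeff n) hmain
  rw [PowerSeries.coeff_mul, Finset.Nat.sum_antidiagonal_eq_sum_range_succ_mk] at hco
  simp only [coeff_mk, Lser] at hco
  have hn : (n.factorial : ℝ) ≠ 0 := by positivity
  rw [div_eq_iff hn] at hco
  rw [hco, Finset.sum_mul]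
  refine Finset.sum_congr rfl fun k hk => ?_
  have hkn : k ≤ n := by
    have := Finset.mem_range.1 hk; omega
  have hch : (n.choose k : ℝ) = n.factorial / (k.factorial * (n-k).factorial) :=
    Nat.cast_choose ℝ hkn
  have h1 : (k.factorial : ℝ) ≠ 0 := by positivity
  have h2 : ((n-k).factorial : ℝ) ≠ 0 := by positivity
  have h3 : (((n-k+m).choose m : ℕ) : ℝ) ≠ 0 := by
    have := Nat.choose_pos (show m ≤ n-k+m from Nat.le_add_left m (n-k))
    positivity
  rw [hch]
  field_simp
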